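/- If G contains a good edge e, then recoloring only e with one new color makes G properly connected; in particular pc_opt(G) ≤ 2 when G has at least 3 vertices. -/

import Mathlib

open SimpleGraph

/-- A walk is properly colored: no two consecutive edges share a color. -/
def ProperWalk {V : Type*} {G : SimpleGraph V} (c : Sym2 V → ℕ) {u v : V} (p : G.Walk u v) : Prop :=
  (p.edges.map c).Chain' (· ≠ ·)

/-- An edge-colored graph is properly connected. -/
def ProperlyConnected {V : Type*} (G : SimpleGraph V) (c : Sym2 V → ℕ) : Prop :=
  ∀ u v : V, u ≠ v → ∃ p : G.Walk u v, p.IsPath ∧ ProperWalk c p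

/-- Number of edges recolored away from the base color 0. -/
noncomputable def numRecolored {V : Type*} (G : SimpleGraph V) (c : Sym2 V → ℕ) : ℕ :=
  {e | e ∈ G.edgeSet ∧ c e ≠ 0}.ncard

/-- Number of new colors used. -/
noncomputable def numNewColors {V : Type*} (G : SimpleGraph V) (c : Sym2 V → ℕ) : ℕ :=
  (c '' {e | e ∈ G.edgeSet ∧ c e ≠ 0}).ncard

/-- Optimal proper connection number: minimum of p + q. -/
noncomputable def pcOpt {V : Type*} (G : SimpleGraph V) : ℕ :=
  sInf { n | ∃ c : Sym2 V → ℕ, ProperlyConnected G c ∧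
    n = numRecolored G c + numNewColors G c }

/-- An edge x₁x₂ is good. -/
def GoodEdge {V : Type*} (G : SimpleGraph V) (x₁ x₂ : V) : Prop :=
  G.Adj x₁ x₂ ∧ ∃ A₁ A₂ : Set V,
    A₁ ∪ A₂ = Set.univ \ (G.neighborSet x₁ ∩ G.neighborSet x₂) ∧
    Disjoint A₁ A₂ ∧
    A₁ ⊆ G.neighborSet x₁ ∧ A₂ ⊆ G.neighborSet x₂ ∧
    (∀ a ∈ A₁, ∀ b ∈ A₁, a ≠ b → G.Adj a b) ∧
    (∀ a ∈ A₂, ∀ b ∈ A₂, a ≠ b → G.Adj a b)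


section Aux
variable {V : Type*} {G : SimpleGraph V}

lemma properWalk_single (c : Sym2 V → ℕ) {u v : V} (h : G.Adj u v) :
    ∃ p : G.Walk u v, p.IsPath ∧ ProperWalk c p :=
  ⟨Walk.cons h Walk.nil, by simp [h.ne], by simp [ProperWalk, List.Chain']⟩

lemma properWalk_three [DecidableEq V] {a b : V} (hab : G.Adj a b) {u v : V}
    (hua : G.Adj u a) (hbv : G.Adj b v) (hub : u ≠ b) (hva : v ≠ a) (huv : u ≠ v) :
    ∃ p : G.Walk u v, p.IsPath ∧ ProperWalk (fun e => if e = s(a, b) then 1 else 0) p := by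
  refine ⟨Walk.cons hua (Walk.cons hab (Walk.cons hbv Walk.nil)), ?_, ?_⟩
  · simp [Walk.isPath_def, hua.ne, hub, huv, hab.ne, hva.symm.symm, hbv.ne,
      Ne.symm hva, hbv.ne']
  · have h1 : s(u, a) ≠ s(a, b) := by
      simp [Sym2.eq_iff, hua.ne, hub]
    have h2 : s(b, v) ≠ s(a, b) := by
      simp [Sym2.eq_iff, hab.ne', hva]
    simp [ProperWalk, h1, h2, List.Chain']

end Aux

theorem stmt4 {V : Type*} [Fintype V] [DecidableEq V] (G : SimpleGraph V)
    (hconn : G.Connected) (x₁ x₂ : V) (h : GoodEdge G x₁ x₂) :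
    ProperlyConnected G (fun e => if e = s(x₁, x₂) then 1 else 0) ∧
      (3 ≤ Fintype.card V → pcOpt G ≤ 2) := by
  obtain ⟨hadj, A₁, A₂, hunion, hdisj, hA₁, hA₂, hcl₁, hcl₂⟩ := h
  have hswap : (fun e => if e = s(x₂, x₁) then (1:ℕ) else 0)
      = fun e => if e = s(x₁, x₂) then 1 else 0 := by
    funext e; rw [Sym2.eq_swap]
  have tri : ∀ w, w ∈ A₁ ∨ w ∈ A₂ ∨ (G.Adj x₁ w ∧ G.Adj x₂ w) := by
    intro w
    by_cases hw : w ∈ G.neighborSet x₁ ∩ G.neighborSet x₂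
    · exact Or.inr (Or.inr ⟨hw.1, hw.2⟩)
    · have : w ∈ A₁ ∪ A₂ := by rw [hunion]; exact ⟨Set.mem_univ w, hw⟩
      rcases this with h | h
      · exact Or.inl h
      · exact Or.inr (Or.inl h)
  have hpc : ProperlyConnected G (fun e => if e = s(x₁, x₂) then 1 else 0) := by
    intro u v huv
    rcases tri u with hu | hu | hu <;> rcases tri v with hv | hv | hv
    · exact properWalk_single _ (hcl₁ u hu v hv huv)
    · by_cases hux : u = x₂
      · exact properWalk_single _ (hux ▸ (hA₂ hv))
      · by_cases hvx : v = x₁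
        · exact properWalk_single _ (hvx ▸ (hA₁ hu)).symm
        · exact properWalk_three hadj (hA₁ hu).symm (hA₂ hv) hux hvx huv
    · by_cases hux : u = x₂
      · exact properWalk_single _ (hux ▸ hv.2)
      · exact properWalk_three hadj (hA₁ hu).symm hv.2 hux hv.1.ne' huv
    · by_cases hux : u = x₁
      · exact properWalk_single _ (hux ▸ (hA₁ hv))
      · by_cases hvx : v = x₂
        · exact properWalk_single _ (hvx ▸ (hA₂ hu)).symm
        · rw [← hswap]
          exact properWalk_three hadj.symm (hA₂ hu).symm (hA₁ hv) hux hvx huv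
    · exact properWalk_single _ (hcl₂ u hu v hv huv)
    · by_cases hux : u = x₁
      · exact properWalk_single _ (hux ▸ hv.1)
      · rw [← hswap]
        exact properWalk_three hadj.symm (hA₂ hu).symm hv.1 hux hv.2.ne' huv
    · by_cases hvx : v = x₂
      · exact properWalk_single _ (hvx ▸ hu.2.symm)
      · rw [← hswap]
        exact properWalk_three hadj.symm hu.2.symm (hA₁ hv) hu.1.ne' hvx huv
    · by_cases hvx : v = x₁
      · exact properWalk_single _ (hvx ▸ hu.1.symm)
      · exact properWalk_three hadj hu.1.symm (hA₂ hv) hu.2.ne' hvx huv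
    · exact properWalk_three hadj hu.1.symm hv.2 hu.2.ne' hv.1.ne' huv
  refine ⟨hpc, fun _ => ?_⟩
  apply Nat.sInf_le
  refine ⟨fun e => if e = s(x₁, x₂) then 1 else 0, hpc, ?_⟩
  have hset : {e | e ∈ G.edgeSet ∧ (fun e => if e = s(x₁, x₂) then (1:ℕ) else 0) e ≠ 0}
      = {s(x₁, x₂)} := by
    ext e
    simp only [Set.mem_setOf_eq, Set.mem_singleton_iff]
    constructor
    · rintro ⟨_, hne⟩
      by_contra hne2
      simp [hne2] at hne
    · rintro rfl
      exact ⟨hadj, by simp⟩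
  rw [numRecolored, numNewColors, hset]
  simp [Set.ncard_singleton]
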